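/- Let n ≥ 1 and let σ be a permutation of {1,…,2n} commuting with the bar involution. For each i ≥ 1 let γ_{(i)} be half the number of σ-orbits O of cardinality i with rev(O) ≠ O (such orbits come in pairs {O, rev(O)}, so this is an integer). Let t ≥ 0 and let λ be a partition of t, with λ_{(i)} parts equal to i. Then the number of subsets K ⊆ {1,…,2n} such that K is properly admissible, σ(K) = K, and the multiset of cardinalities of the σ-orbits contained in K equals the multiset of parts of λ, is 2^{∑_{i≥1} λ_{(i)}} · ∏_{i≥1} binom(γ_{(i)}, λ_{(i)}). -/

import Mathlib

open scoped Classical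

/-- The orbit of x under the cyclic group generated by σ, as a Finset. -/
noncomputable def orbitFinset {m : ℕ} (σ : Equiv.Perm (Fin m)) (x : Fin m) :
    Finset (Fin m) :=
  Finset.univ.filter fun y => σ.SameCycle x y

section OrbitLemmas

variable {m : ℕ} (σ : Equiv.Perm (Fin m))

lemma mem_orbit {x y : Fin m} : y ∈ orbitFinset σ x ↔ σ.SameCycle x y := by
  simp [orbitFinset]

lemma mem_orbit_self (x : Fin m) : x ∈ orbitFinset σ x := by
  simp only [mem_orbit]
  exact Equiv.Perm.SameCycle.refl σ x

lemma orbit_eq_of_mem {x y : Fin m} (h : y ∈ orbitFinset σ x) :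
    orbitFinset σ y = orbitFinset σ x := by
  rw [mem_orbit] at h
  ext z
  simp only [mem_orbit]
  exact ⟨fun hz => h.trans hz, fun hz => h.symm.trans hz⟩

lemma orbit_nonempty (x : Fin m) : (orbitFinset σ x).Nonempty :=
  ⟨x, mem_orbit_self σ x⟩

lemma mem_orbit_apply (x : Fin m) : σ x ∈ orbitFinset σ x := by
  rw [mem_orbit]
  exact (Equiv.Perm.sameCycle_apply_right).mpr (Equiv.Perm.SameCycle.refl σ x)

lemma mem_orbit_inv_apply (x : Fin m) : σ⁻¹ x ∈ orbitFinset σ x := by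
  rw [mem_orbit]
  exact ⟨-1, by simp [zpow_neg]⟩

lemma pow_apply_mem {K : Finset (Fin m)} (hK : K.image σ = K) {x : Fin m}
    (hx : x ∈ K) (k : ℕ) : (σ ^ k) x ∈ K := by
  induction k with
  | zero => simpa
  | succ k ih =>
      rw [pow_succ', Equiv.Perm.mul_apply]
      exact hK ▸ Finset.mem_image_of_mem σ ih

lemma sameCycle_mem {K : Finset (Fin m)} (hK : K.image σ = K) {x y : Fin m}
    (hxy : σ.SameCycle x y) (hx : x ∈ K) : y ∈ K := by
  obtain ⟨k, _, hk⟩ := hxy.exists_pow_eq'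
  exact hk ▸ pow_apply_mem σ hK hx k

lemma orbit_subset {K : Finset (Fin m)} (hK : K.image σ = K) {x : Fin m}
    (hx : x ∈ K) : orbitFinset σ x ⊆ K := fun y hy =>
  sameCycle_mem σ hK ((mem_orbit σ).mp hy) hx

lemma rev_pow_comm (hσ : ∀ i : Fin m, σ i.rev = (σ i).rev) (k : ℕ) (x : Fin m) :
    (σ ^ k) x.rev = ((σ ^ k) x).rev := by
  induction k with
  | zero => simp
  | succ k ih =>
      rw [pow_succ', Equiv.Perm.mul_apply, Equiv.Perm.mul_apply, ih, hσ]

lemma sameCycle_rev (hσ : ∀ i : Fin m, σ i.rev = (σ i).rev) {x y : Fin m}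
    (h : σ.SameCycle x y) : σ.SameCycle x.rev y.rev := by
  obtain ⟨k, -, hk⟩ := h.exists_pow_eq'
  exact ⟨(k : ℤ), by rw [zpow_natCast, rev_pow_comm σ hσ, hk]⟩

lemma orbit_rev (hσ : ∀ i : Fin m, σ i.rev = (σ i).rev) (x : Fin m) :
    (orbitFinset σ x).image Fin.rev = orbitFinset σ x.rev := by
  ext y
  simp only [Finset.mem_image, mem_orbit]
  constructor
  · rintro ⟨z, hz, rfl⟩
    exact sameCycle_rev σ hσ hz
  · intro h
    refine ⟨y.rev, ?_, Fin.rev_rev y⟩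
    have := sameCycle_rev σ hσ h
    rwa [Fin.rev_rev] at this

end OrbitLemmas

section CountLemmas

lemma erase_bij {α : Type*} [DecidableEq α] (A : Finset α) (I : α → α)
    (hinv : ∀ x ∈ A, I (I x) = x) (e : α) (he : e ∈ A) (hnee : I e ≠ e) (k' : ℕ) :
    ((A.powerset.filter fun S => S.card = k' + 1 ∧ ∀ x ∈ S, I x ∉ S).filter
        (fun S => e ∈ S)).card =
      ((A \ {e, I e}).powerset.filter fun S => S.card = k' ∧ ∀ x ∈ S, I x ∉ S).card := by
  refine Finset.card_nbij' (fun S => S.erase e) (fun T => insert e T) ?_ ?_ ?_ ?_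
  · intro S hS
    simp only [Finset.mem_coe, Finset.mem_filter, Finset.mem_powerset] at hS ⊢
    obtain ⟨⟨hSA, hScard, hSav⟩, heS⟩ := hS
    have hIe : I e ∉ S := hSav e heS
    refine ⟨?_, ?_, ?_⟩
    · intro x hx
      have hx' := Finset.mem_of_mem_erase hx
      have hxe := Finset.ne_of_mem_erase hx
      simp only [Finset.mem_sdiff, Finset.mem_insert, Finset.mem_singleton]
      exact ⟨hSA hx', by rintro (rfl | rfl) <;> [exact hxe rfl; exact hIe hx']⟩
    · rw [Finset.card_erase_of_mem heS, hScard]; rfl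
    · intro x hx
      exact fun hcon => hSav x (Finset.mem_of_mem_erase hx) (Finset.mem_of_mem_erase hcon)
  · intro T hT
    simp only [Finset.mem_coe, Finset.mem_filter, Finset.mem_powerset] at hT ⊢
    obtain ⟨hTA, hTcard, hTav⟩ := hT
    have hmem : ∀ x ∈ T, x ∈ A ∧ x ≠ e ∧ x ≠ I e := by
      intro x hx
      have := hTA hx
      simp only [Finset.mem_sdiff, Finset.mem_insert, Finset.mem_singleton] at this
      tauto
    have heT : e ∉ T := fun h => ((hmem e h).2.1) rfl
    have hIeT : I e ∉ T := fun h => ((hmem (I e) h).2.2) rfl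
    refine ⟨⟨?_, ?_, ?_⟩, Finset.mem_insert_self e T⟩
    · intro x hx
      rcases Finset.mem_insert.mp hx with rfl | hx
      · exact he
      · exact (hmem x hx).1
    · rw [Finset.card_insert_of_notMem heT, hTcard]
    · intro x hx
      rcases Finset.mem_insert.mp hx with rfl | hx
      · simp only [Finset.mem_insert, not_or]
        exact ⟨hnee, hIeT⟩
      · simp only [Finset.mem_insert, not_or]
        refine ⟨?_, hTav x hx⟩
        intro hcon
        have hxA := (hmem x hx).1
        have : x = I e := by rw [← hcon, hinv x hxA]
        exact (hmem x hx).2.2 this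
  · intro S hS
    simp only [Finset.mem_coe, Finset.mem_filter] at hS
    exact Finset.insert_erase hS.2
  · intro T hT
    simp only [Finset.mem_coe, Finset.mem_filter, Finset.mem_powerset] at hT
    apply Finset.erase_insert
    intro h
    have := hT.1 h
    simp at this

lemma count_inv {α : Type*} [DecidableEq α] (c : ℕ) : ∀ (A : Finset α), A.card = c →
    ∀ (I : α → α), (∀ x ∈ A, I x ∈ A) → (∀ x ∈ A, I (I x) = x) → (∀ x ∈ A, I x ≠ x) →
    ∀ k, (A.powerset.filter fun S => S.card = k ∧ ∀ x ∈ S, I x ∉ S).card =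
      2 ^ k * Nat.choose (A.card / 2) k := by
  induction c using Nat.strong_induction_on with
  | _ c IH =>
  intro A hA I hI hinv hne k
  rcases Nat.eq_zero_or_pos k with rfl | hk
  · have : (A.powerset.filter fun S => S.card = 0 ∧ ∀ x ∈ S, I x ∉ S) = {∅} := by
      ext S
      simp only [Finset.mem_filter, Finset.mem_powerset, Finset.mem_singleton,
        Finset.card_eq_zero]
      constructor
      · rintro ⟨-, rfl, -⟩; rfl
      · rintro rfl; simp
    rw [this]; simp
  obtain ⟨k', rfl⟩ : ∃ k', k = k' + 1 := ⟨k - 1, by omega⟩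
  rcases A.eq_empty_or_nonempty with rfl | ⟨a, ha⟩
  · rw [Finset.powerset_empty, Finset.filter_singleton]
    simp
  -- nonempty case
  have hbA : I a ∈ A := hI a ha
  have hba : I a ≠ a := hne a ha
  have hcard2 : 2 ≤ A.card := Finset.one_lt_card.mpr ⟨I a, hbA, a, ha, hba⟩
  set A' := A \ {a, I a} with hA'
  have hA'card : A'.card = c - 2 := by
    rw [hA', Finset.card_sdiff_of_subset (by intro x hx; simp at hx; rcases hx with rfl | rfl <;> assumption)]
    rw [Finset.card_pair (Ne.symm hba)]
    omega
  have hmemA' : ∀ x, x ∈ A' ↔ x ∈ A ∧ x ≠ a ∧ x ≠ I a := by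
    intro x; simp [hA', and_assoc]
  have hIA' : ∀ x ∈ A', I x ∈ A' := by
    intro x hx
    rw [hmemA'] at hx ⊢
    obtain ⟨hxA, hxa, hxb⟩ := hx
    refine ⟨hI x hxA, ?_, ?_⟩
    · intro h; exact hxb (by rw [← hinv x hxA, h])
    · intro h
      have := hinv x hxA
      rw [h, hinv a ha] at this
      exact hxa this.symm
  have hinvA' : ∀ x ∈ A', I (I x) = x := fun x hx => hinv x ((hmemA' x).mp hx).1
  have hneA' : ∀ x ∈ A', I x ≠ x := fun x hx => hne x ((hmemA' x).mp hx).1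
  have hc2 : c - 2 < c := by omega
  have IH1 := IH (c - 2) hc2 A' hA'card I hIA' hinvA' hneA' (k' + 1)
  have IH2 := IH (c - 2) hc2 A' hA'card I hIA' hinvA' hneA' k'
  set F := (A.powerset.filter fun S => S.card = k' + 1 ∧ ∀ x ∈ S, I x ∉ S) with hF
  have key_a : (F.filter (fun S => a ∈ S)).card =
      (A'.powerset.filter fun S => S.card = k' ∧ ∀ x ∈ S, I x ∉ S).card :=
    erase_bij A I hinv a ha (hne a ha) k'
  have key_b : (F.filter (fun S => I a ∈ S)).card =
      (A'.powerset.filter fun S => S.card = k' ∧ ∀ x ∈ S, I x ∉ S).card := by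
    have h2 := erase_bij A I hinv (I a) hbA (hne (I a) hbA) k'
    rw [hinv a ha, Finset.pair_comm] at h2
    exact h2
  have split1 := Finset.card_filter_add_card_filter_not (s := F) (p := fun S => a ∈ S)
  have split2 := Finset.card_filter_add_card_filter_not
    (s := F.filter (fun S => a ∉ S)) (p := fun S => I a ∈ S)
  have c1 : (F.filter fun S => a ∉ S).filter (fun S => I a ∈ S) =
      F.filter (fun S => I a ∈ S) := by
    ext S
    simp only [hF, Finset.mem_filter, Finset.mem_powerset]
    constructor
    · tauto
    · rintro ⟨⟨hSA, hcard, hav⟩, hIa⟩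
      have hnotA : a ∉ S := by
        have := hav (I a) hIa
        rwa [hinv a ha] at this
      exact ⟨⟨⟨hSA, hcard, hav⟩, hnotA⟩, hIa⟩
  have c2 : (F.filter fun S => a ∉ S).filter (fun S => I a ∉ S) =
      A'.powerset.filter (fun S => S.card = k' + 1 ∧ ∀ x ∈ S, I x ∉ S) := by
    ext S
    simp only [hF, Finset.mem_filter, Finset.mem_powerset]
    constructor
    · rintro ⟨⟨⟨hSA, hP⟩, hna⟩, hnb⟩
      refine ⟨?_, hP⟩
      intro x hx
      rw [hmemA']
      exact ⟨hSA hx, fun h => hna (h ▸ hx), fun h => hnb (h ▸ hx)⟩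
    · rintro ⟨hSA', hP⟩
      have hsub : ∀ x ∈ S, x ∈ A ∧ x ≠ a ∧ x ≠ I a := fun x hx => (hmemA' x).mp (hSA' hx)
      exact ⟨⟨⟨fun x hx => (hsub x hx).1, hP⟩, fun h => (hsub a h).2.1 rfl⟩,
        fun h => (hsub (I a) h).2.2 rfl⟩
  rw [c1, c2] at split2
  have hγ1 : 1 ≤ A.card / 2 := by
    calc 1 = 2 / 2 := rfl
    _ ≤ A.card / 2 := Nat.div_le_div_right hcard2
  obtain ⟨γ, hγ⟩ : ∃ γ, A.card / 2 = γ + 1 := ⟨A.card / 2 - 1, by omega⟩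
  have hA'2 : A'.card / 2 = γ := by
    have h2 : A.card = A'.card + 2 := by omega
    have := Nat.add_div_right A'.card (show 0 < 2 by norm_num)
    omega
  have IH2' : (Finset.filter (fun S => S.card = k' ∧ ∀ x ∈ S, I x ∉ S) A'.powerset).card =
      2 ^ k' * γ.choose k' := by
    have := IH2
    rw [hA'2] at this
    convert this using 2
    congr!
  have IH1' : (Finset.filter (fun S => S.card = k' + 1 ∧ ∀ x ∈ S, I x ∉ S) A'.powerset).card =
      2 ^ (k' + 1) * γ.choose (k' + 1) := by
    have := IH1
    rw [hA'2] at this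
    convert this using 2
    congr!
  have key_a' : (Finset.filter (fun S => a ∈ S) F).card = 2 ^ k' * γ.choose k' := by
    have h1 : (Finset.filter (fun S => a ∈ S) F).card =
        (Finset.filter (fun S => S.card = k' ∧ ∀ x ∈ S, I x ∉ S) A'.powerset).card := by
      convert key_a using 2
    rw [h1, IH2']
  have key_b' : (Finset.filter (fun S => I a ∈ S) F).card = 2 ^ k' * γ.choose k' := by
    have h1 : (Finset.filter (fun S => I a ∈ S) F).card =
        (Finset.filter (fun S => S.card = k' ∧ ∀ x ∈ S, I x ∉ S) A'.powerset).card := by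
      convert key_b using 2
    rw [h1, IH2']
  have main : F.card = 2 ^ (k' + 1) * ((γ + 1).choose (k' + 1)) := by
    rw [← split1, ← split2, key_a', key_b', IH1', Nat.choose_succ_succ, pow_succ]
    ring
  rw [hγ]
  convert main using 2
  rw [hF]
  congr!

lemma step2gen {γ : Type*} [DecidableEq γ] [Fintype γ] (Ω : Finset γ) (w : γ → ℕ)
    (rv : γ → γ) (t : ℕ) (P : Multiset ℕ) (hP : ∀ c ∈ P, c ≤ t)
    (hw : ∀ O ∈ Ω, w (rv O) = w O) :
    (Finset.univ.filter fun S : Finset γ =>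
        S ⊆ Ω ∧ (∀ O ∈ S, rv O ∉ S) ∧ Multiset.map w S.val = P).card =
      ∏ i ∈ Finset.range (t + 1),
        ((Ω.filter fun O => w O = i ∧ rv O ≠ O).powerset.filter fun S =>
          S.card = Multiset.count i P ∧ ∀ O ∈ S, rv O ∉ S).card := by
  classical
  rw [← Finset.card_pi]
  have hcount : ∀ (S : Finset γ) (i : ℕ),
      Multiset.count i (Multiset.map w S.val) = (S.filter fun O => w O = i).card := by
    intro S i
    rw [Multiset.count_map]
    have : S.val.filter (fun a => i = w a) = S.val.filter (fun a => w a = i) :=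
      Multiset.filter_congr (fun x _ => eq_comm)
    rw [this]
    rfl
  refine Finset.card_nbij' (fun S => fun i _ => S.filter (fun O => w O = i))
    (fun g => (Finset.range (t + 1)).attach.biUnion (fun i => g i.1 i.2)) ?_ ?_ ?_ ?_
  · -- forward well-defined
    intro S hS
    simp only [Finset.mem_coe, Finset.mem_filter, Finset.mem_univ, true_and] at hS
    obtain ⟨hSΩ, hav, hmul⟩ := hS
    rw [Finset.mem_coe, Finset.mem_pi]
    intro i hi
    simp only [Finset.mem_filter, Finset.mem_powerset]
    refine ⟨?_, ?_, ?_⟩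
    · intro O hO
      rw [Finset.mem_filter] at hO ⊢
      obtain ⟨hOS, hwO⟩ := hO
      refine ⟨hSΩ hOS, hwO, fun h => hav O hOS (h.symm ▸ hOS)⟩
    · rw [← hmul, hcount]
    · intro O hO hcon
      exact hav O hO.1 hcon.1
  · -- backward well-defined
    intro g hg
    rw [Finset.mem_coe, Finset.mem_pi] at hg
    have hg' : ∀ (i : ℕ) (hi : i ∈ Finset.range (t + 1)),
        (g i hi ⊆ Ω.filter fun O => w O = i ∧ rv O ≠ O) ∧
        (g i hi).card = Multiset.count i P ∧ ∀ O ∈ g i hi, rv O ∉ g i hi := by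
      intro i hi
      have := hg i hi
      simp only [Finset.mem_filter, Finset.mem_powerset] at this
      exact this
    set T := (Finset.range (t + 1)).attach.biUnion (fun i => g i.1 i.2) with hT
    have hmemT : ∀ O, O ∈ T ↔ ∃ i, ∃ hi : i ∈ Finset.range (t + 1), O ∈ g i hi := by
      intro O
      rw [hT, Finset.mem_biUnion]
      constructor
      · rintro ⟨⟨i, hi⟩, -, hO⟩; exact ⟨i, hi, hO⟩
      · rintro ⟨i, hi, hO⟩; exact ⟨⟨i, hi⟩, Finset.mem_attach _ _, hO⟩
    have hOT : ∀ O ∈ T, O ∈ Ω ∧ w O ≤ t ∧ rv O ≠ O := by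
      intro O hO
      rw [hmemT] at hO
      obtain ⟨i, hi, hO⟩ := hO
      have h1 := (hg' i hi).1 hO
      rw [Finset.mem_filter] at h1
      have hit : i ≤ t := by have := Finset.mem_range.mp hi; omega
      exact ⟨h1.1, h1.2.1 ▸ hit, h1.2.2⟩
    have hfilT : ∀ (c : ℕ) (hc : c ∈ Finset.range (t + 1)),
        T.filter (fun O => w O = c) = g c hc := by
      intro c hc
      ext O
      rw [Finset.mem_filter, hmemT]
      constructor
      · rintro ⟨⟨i, hi, hO⟩, hwc⟩
        have h1 := (hg' i hi).1 hO
        rw [Finset.mem_filter] at h1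
        have : i = c := by rw [← h1.2.1, hwc]
        subst this
        exact hO
      · intro hO
        have h1 := (hg' c hc).1 hO
        rw [Finset.mem_filter] at h1
        exact ⟨⟨c, hc, hO⟩, h1.2.1⟩
    simp only [Finset.mem_coe, Finset.mem_filter, Finset.mem_univ, true_and]
    refine ⟨fun O hO => (hOT O hO).1, ?_, ?_⟩
    · -- avoid
      intro O hO hcon
      rw [hmemT] at hO hcon
      obtain ⟨i, hi, hOi⟩ := hO
      obtain ⟨j, hj, hOj⟩ := hcon
      have h1 := (hg' i hi).1 hOi
      have h2 := (hg' j hj).1 hOj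
      rw [Finset.mem_filter] at h1 h2
      have : j = i := by rw [← h2.2.1, hw O h1.1, h1.2.1]
      subst this
      exact (hg' j hj).2.2 O hOi hOj
    · -- multiset
      ext c
      rw [hcount]
      by_cases hc : c ∈ Finset.range (t + 1)
      · rw [hfilT c hc]
        exact (hg' c hc).2.1
      · have hct : t < c := by
          rw [Finset.mem_range] at hc; omega
        have h0 : T.filter (fun O => w O = c) = ∅ := by
          rw [Finset.filter_eq_empty_iff]
          intro O hO
          have := (hOT O hO).2.1
          omega
        rw [h0]
        have : c ∉ P := fun h => by have := hP c h; omega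
        rw [Finset.card_empty, Multiset.count_eq_zero_of_notMem this]
  · -- left inverse
    intro S hS
    simp only [Finset.mem_coe, Finset.mem_filter, Finset.mem_univ, true_and] at hS
    obtain ⟨hSΩ, hav, hmul⟩ := hS
    ext O
    rw [Finset.mem_biUnion]
    constructor
    · rintro ⟨⟨i, hi⟩, -, hO⟩
      exact (Finset.mem_filter.mp hO).1
    · intro hO
      have hwOt : w O ≤ t := by
        have : w O ∈ Multiset.map w S.val := Multiset.mem_map_of_mem w hO
        rw [hmul] at this
        exact hP _ this
      refine ⟨⟨w O, Finset.mem_range.mpr (by omega)⟩, Finset.mem_attach _ _, ?_⟩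
      exact Finset.mem_filter.mpr ⟨hO, rfl⟩
  · -- right inverse
    intro g hg
    funext i hi
    rw [Finset.mem_coe, Finset.mem_pi] at hg
    have hg' : ∀ (i : ℕ) (hi : i ∈ Finset.range (t + 1)),
        (g i hi ⊆ Ω.filter fun O => w O = i ∧ rv O ≠ O) := by
      intro i hi
      have := hg i hi
      simp only [Finset.mem_filter, Finset.mem_powerset] at this
      exact this.1
    ext O
    rw [Finset.mem_filter, Finset.mem_biUnion]
    constructor
    · rintro ⟨⟨⟨j, hj⟩, -, hO⟩, hwc⟩
      have h1 := hg' j hj hO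
      rw [Finset.mem_filter] at h1
      have : j = i := by rw [← h1.2.1, hwc]
      subst this
      exact hO
    · intro hO
      have h1 := hg' i hi hO
      rw [Finset.mem_filter] at h1
      exact ⟨⟨⟨i, hi⟩, Finset.mem_attach _ _, hO⟩, h1.2.1⟩

end CountLemmas

theorem stmt8 (n : ℕ) (hn : 1 ≤ n) (σ : Equiv.Perm (Fin (2 * n)))
    (hσ : ∀ i, σ i.rev = (σ i).rev) (t : ℕ) (μ : Nat.Partition t) :
    (Finset.univ.filter fun K : Finset (Fin (2 * n)) =>
        (∀ i ∈ K, i.rev ∉ K) ∧ K.image σ = K ∧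
          Multiset.map Finset.card
              ((Finset.univ.image fun x => orbitFinset σ x).filter
                (fun O => O ⊆ K)).val = μ.parts).card =
      2 ^ (∑ i ∈ Finset.range (t + 1), Multiset.count i μ.parts) *
        ∏ i ∈ Finset.range (t + 1),
          Nat.choose
            (((Finset.univ.image fun x => orbitFinset σ x).filter
                (fun O => O.card = i ∧ O.image Fin.rev ≠ O)).card / 2)
            (Multiset.count i μ.parts) := by
  set Ω := (Finset.univ.image fun x : Fin (2 * n) => orbitFinset σ x) with hΩdef
  -- basic facts about Ω
  have hOorb : ∀ O ∈ Ω, ∀ x ∈ O, O = orbitFinset σ x := by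
    intro O hO x hx
    rw [hΩdef, Finset.mem_image] at hO
    obtain ⟨y, -, rfl⟩ := hO
    exact (orbit_eq_of_mem σ hx).symm
  have hΩne : ∀ O ∈ Ω, O.Nonempty := by
    intro O hO
    rw [hΩdef, Finset.mem_image] at hO
    obtain ⟨y, -, rfl⟩ := hO
    exact orbit_nonempty σ y
  have hback : ∀ S : Finset (Finset (Fin (2 * n))), S ⊆ Ω →
      Ω.filter (fun O => O ⊆ S.sup id) = S := by
    intro S hSΩ
    ext O
    rw [Finset.mem_filter]
    constructor
    · rintro ⟨hOΩ, hsub⟩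
      obtain ⟨y, hy⟩ := hΩne O hOΩ
      obtain ⟨O', hO', hyO'⟩ := Finset.mem_sup.mp (hsub hy)
      have hOO' : O = O' := by
        rw [hOorb O hOΩ y hy, hOorb O' (hSΩ hO') y hyO']
      exact hOO' ▸ hO'
    · intro hO
      exact ⟨hSΩ hO, Finset.le_sup (f := id) hO⟩
  have hμle : ∀ c ∈ μ.parts, c ≤ t := by
    intro c hc
    have := Multiset.single_le_sum (fun x _ => Nat.zero_le x) c hc
    rwa [μ.parts_sum] at this
  refine Eq.trans (Finset.card_nbij'
    (t := Finset.univ.filter fun S : Finset (Finset (Fin (2 * n))) =>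
      S ⊆ Ω ∧ (∀ O ∈ S, O.image Fin.rev ∉ S) ∧ Multiset.map Finset.card S.val = μ.parts)
    (fun K => Ω.filter (fun O => O ⊆ K)) (fun S => S.sup id) ?_ ?_ ?_ ?_) ?_
  · -- forward well-defined
    intro K hK
    simp only [Finset.mem_coe, Finset.mem_filter, Finset.mem_univ, true_and] at hK ⊢
    obtain ⟨hadm, hinvK, hmul⟩ := hK
    refine ⟨Finset.filter_subset _ _, ?_, ?_⟩
    · intro O hO hcon
      obtain ⟨y, hy⟩ := hΩne O hO.1
      exact hadm y (hO.2 hy) (hcon.2 (Finset.mem_image_of_mem Fin.rev hy))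
    · exact hmul
  · -- backward well-defined
    intro S hS
    simp only [Finset.mem_coe, Finset.mem_filter, Finset.mem_univ, true_and] at hS ⊢
    obtain ⟨hSΩ, hav, hmul⟩ := hS
    refine ⟨?_, ?_, ?_⟩
    · -- admissibility
      intro x hx hcon
      obtain ⟨O, hO, hxO⟩ := Finset.mem_sup.mp hx
      obtain ⟨O', hO', hxO'⟩ := Finset.mem_sup.mp hcon
      have h1 : O = orbitFinset σ x := hOorb O (hSΩ hO) x hxO
      have h2 : O' = orbitFinset σ x.rev := hOorb O' (hSΩ hO') x.rev hxO'
      have : O.image Fin.rev = O' := by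
        rw [h1, h2, orbit_rev σ hσ x]
      exact hav O hO (this ▸ hO')
    · -- invariance
      ext y
      simp only [Finset.mem_image]
      constructor
      · rintro ⟨x, hx, rfl⟩
        obtain ⟨O, hO, hxO⟩ := Finset.mem_sup.mp hx
        refine Finset.mem_sup.mpr ⟨O, hO, ?_⟩
        rw [hOorb O (hSΩ hO) x hxO]
        exact mem_orbit_apply σ x
      · intro hy
        obtain ⟨O, hO, hyO⟩ := Finset.mem_sup.mp hy
        refine ⟨σ⁻¹ y, Finset.mem_sup.mpr ⟨O, hO, ?_⟩, by simp⟩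
        rw [hOorb O (hSΩ hO) y hyO]
        exact mem_orbit_inv_apply σ y
    · -- multiset condition
      rw [hback S hSΩ]
      exact hmul
  · -- left inverse
    intro K hK
    simp only [Finset.mem_coe, Finset.mem_filter, Finset.mem_univ, true_and] at hK
    obtain ⟨hadm, hinvK, hmul⟩ := hK
    ext x
    rw [Finset.mem_sup]
    constructor
    · rintro ⟨O, hO, hxO⟩
      exact (Finset.mem_filter.mp hO).2 hxO
    · intro hx
      refine ⟨orbitFinset σ x, Finset.mem_filter.mpr ⟨?_, orbit_subset σ hinvK hx⟩,
        mem_orbit_self σ x⟩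
      rw [hΩdef]
      exact Finset.mem_image_of_mem _ (Finset.mem_univ x)
  · -- right inverse
    intro S hS
    simp only [Finset.mem_coe, Finset.mem_filter, Finset.mem_univ, true_and] at hS
    exact hback S hS.1
  -- step 2 and 3: counting the S's
  have hw : ∀ O ∈ Ω, (O.image Fin.rev).card = O.card := by
    intro O hO
    exact Finset.card_image_of_injective O Fin.rev_injective
  have h2 := step2gen Ω Finset.card (fun O => O.image Fin.rev) t μ.parts hμle hw
  refine Eq.trans ?_ (Eq.trans h2 ?_)
  · congr!
  -- now prove the product equality
  have hrevΩ : ∀ O ∈ Ω, O.image Fin.rev ∈ Ω := by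
    intro O hO
    rw [hΩdef, Finset.mem_image] at hO ⊢
    obtain ⟨y, -, rfl⟩ := hO
    exact ⟨y.rev, Finset.mem_univ _, (orbit_rev σ hσ y).symm⟩
  have hrevrev : ∀ O : Finset (Fin (2 * n)), (O.image Fin.rev).image Fin.rev = O := by
    intro O
    rw [Finset.image_image]
    have : (Fin.rev ∘ Fin.rev : Fin (2 * n) → Fin (2 * n)) = id := by
      funext x; simp [Function.comp, Fin.rev_rev]
    rw [this, Finset.image_id]
  have hfac : ∀ i ∈ Finset.range (t + 1),
      ((Ω.filter fun O => O.card = i ∧ O.image Fin.rev ≠ O).powerset.filter fun S =>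
          S.card = Multiset.count i μ.parts ∧ ∀ O ∈ S, O.image Fin.rev ∉ S).card =
        2 ^ (Multiset.count i μ.parts) *
          Nat.choose ((Ω.filter fun O => O.card = i ∧ O.image Fin.rev ≠ O).card / 2)
            (Multiset.count i μ.parts) := by
    intro i hi
    set A := Ω.filter fun O => O.card = i ∧ O.image Fin.rev ≠ O with hA
    have hI : ∀ O ∈ A, O.image Fin.rev ∈ A := by
      intro O hO
      rw [hA, Finset.mem_filter] at hO ⊢
      obtain ⟨hOΩ, hci, hne⟩ := hO
      refine ⟨hrevΩ O hOΩ, ?_, ?_⟩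
      · rw [hw O hOΩ, hci]
      · rw [hrevrev O]
        exact fun h => hne h.symm
    have hinv : ∀ O ∈ A, (O.image Fin.rev).image Fin.rev = O := fun O _ => hrevrev O
    have hne : ∀ O ∈ A, O.image Fin.rev ≠ O := by
      intro O hO
      rw [hA, Finset.mem_filter] at hO
      exact hO.2.2
    have := count_inv A.card A rfl (fun O => O.image Fin.rev) hI hinv hne
      (Multiset.count i μ.parts)
    convert this using 2
    congr!
  rw [Finset.prod_congr rfl hfac, Finset.prod_mul_distrib,
    Finset.prod_pow_eq_pow_sum]
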